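/- Let s, t ∈ ℝ with 2 ≤ s ≤ 4 and 2 ≤ t ≤ 4. Then for all P, Q ∈ Γ_n with r ≤ p_i/q_i ≤ R for all i: (1/R^{s+1}) ((R+1)/2)^{s−t} (((4−s)R + s)/(tR + 4 − t)) ζ_t(P||Q) ≤ ζ_s(Q||P) ≤ (1/r^{s+1}) ((r+1)/2)^{s−t} (((4−s)r + s)/(tr + 4 − t)) ζ_t(P||Q). -/

import Mathlib

open Real Finset

/-- Relative information of type `s` (generalized Kullback-Leibler divergence). -/
noncomputable def Phi (n : ℕ) (s : ℝ) (p q : Fin n → ℝ) : ℝ :=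
  if s = 0 then ∑ i, q i * Real.log (q i / p i)
  else if s = 1 then ∑ i, p i * Real.log (p i / q i)
  else (s * (s - 1))⁻¹ * ((∑ i, (p i) ^ s * (q i) ^ (1 - s)) - 1)

/-- Unified relative JS and AG divergence of type `s`. -/
noncomputable def Omega (n : ℕ) (s : ℝ) (p q : Fin n → ℝ) : ℝ :=
  if s = 0 then ∑ i, p i * Real.log (2 * p i / (p i + q i))
  else if s = 1 then ∑ i, ((p i + q i) / 2) * Real.log ((p i + q i) / (2 * p i))
  else (s * (s - 1))⁻¹ * ((∑ i, p i * ((p i + q i) / (2 * p i)) ^ s) - 1)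

/-- Relative J-divergence of type `s`. -/
noncomputable def zeta (n : ℕ) (s : ℝ) (p q : Fin n → ℝ) : ℝ :=
  if s = 1 then ∑ i, (p i - q i) * Real.log ((p i + q i) / (2 * q i))
  else (s - 1)⁻¹ * ∑ i, (p i - q i) * ((p i + q i) / (2 * q i)) ^ (s - 1)


noncomputable def phiF (s x : ℝ) : ℝ := (s - 1)⁻¹ * ((1 - x) * ((1 + x) / (2 * x)) ^ (s - 1))
noncomputable def phi1 (s x : ℝ) : ℝ :=
  -(s - 1)⁻¹ * (((1 + x) / (2 * x)) ^ (s - 2) * ((x ^ 2 + (2 - s) * x + (s - 1)) / (2 * x ^ 2)))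
noncomputable def phi2 (s x : ℝ) : ℝ :=
  ((1 + x) / (2 * x)) ^ (s - 3) * (((4 - s) * x + s) / (4 * x ^ 4))
noncomputable def psiF (t x : ℝ) : ℝ := (t - 1)⁻¹ * ((x - 1) * ((1 + x) / 2) ^ (t - 1))
noncomputable def psi1 (t x : ℝ) : ℝ :=
  (t - 1)⁻¹ * (((1 + x) / 2) ^ (t - 2) * ((t * x + 2 - t) / 2))
noncomputable def psi2 (t x : ℝ) : ℝ := ((1 + x) / 2) ^ (t - 3) * ((t * x + 4 - t) / 4)

lemma hasDerivAt_v {x : ℝ} (hx : 0 < x) :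
    HasDerivAt (fun y : ℝ => (1 + y) / (2 * y)) (-(1 / (2 * x ^ 2))) x := by
  have h1 : HasDerivAt (fun y : ℝ => 1 + y) 1 x := (hasDerivAt_id x).const_add 1
  have h2 : HasDerivAt (fun y : ℝ => 2 * y) 2 x := by
    simpa using (hasDerivAt_id x).const_mul 2
  have h := h1.div h2 (by positivity)
  refine h.congr_deriv ?_
  field_simp
  ring

lemma phiF_hasDerivAt (s : ℝ) (hs : s ≠ 1) {x : ℝ} (hx : 0 < x) :
    HasDerivAt (phiF s) (phi1 s x) x := by
  have hv : (0:ℝ) < (1 + x) / (2 * x) := by positivity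
  have hvp := (hasDerivAt_v hx).rpow_const (p := s - 1) (Or.inl hv.ne')
  have hlin : HasDerivAt (fun y : ℝ => 1 - y) (-1) x := (hasDerivAt_id x).const_sub 1
  have h := (hlin.mul hvp).const_mul ((s - 1)⁻¹)
  refine h.congr_deriv ?_
  simp only [phi1]
  rw [show s - 1 - 1 = s - 2 by ring]
  rw [show ((1 + x) / (2 * x)) ^ (s - 1) = ((1 + x) / (2 * x)) ^ (s - 2) * ((1 + x) / (2 * x)) by
    rw [show s - 1 = (s - 2) + 1 by ring, Real.rpow_add hv, Real.rpow_one]]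
  field_simp [sub_ne_zero.mpr hs]
  ring

lemma phi1_hasDerivAt (s : ℝ) (hs : s ≠ 1) {x : ℝ} (hx : 0 < x) :
    HasDerivAt (phi1 s) (phi2 s x) x := by
  have hv : (0:ℝ) < (1 + x) / (2 * x) := by positivity
  have hvp := (hasDerivAt_v hx).rpow_const (p := s - 2) (Or.inl hv.ne')
  have hnum : HasDerivAt (fun y : ℝ => y ^ 2 + (2 - s) * y + (s - 1)) (2 * x + (2 - s)) x := by
    have h := ((hasDerivAt_pow 2 x).add ((hasDerivAt_id x).const_mul (2 - s))).add_const (s - 1)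
    refine h.congr_deriv ?_
    simp
  have hden : HasDerivAt (fun y : ℝ => 2 * y ^ 2) (4 * x) x := by
    have h := (hasDerivAt_pow 2 x).const_mul 2
    refine h.congr_deriv ?_
    simp
    ring
  have hQ := hnum.div hden (by positivity)
  have h := (hvp.mul hQ).const_mul (-(s - 1)⁻¹)
  refine h.congr_deriv ?_
  simp only [phi2, Pi.div_apply]
  rw [show s - 2 - 1 = s - 3 by ring]
  rw [show ((1 + x) / (2 * x)) ^ (s - 2) = ((1 + x) / (2 * x)) ^ (s - 3) * ((1 + x) / (2 * x)) by
    rw [show s - 2 = (s - 3) + 1 by ring, Real.rpow_add hv, Real.rpow_one]]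
  field_simp [sub_ne_zero.mpr hs]
  ring

lemma psiF_hasDerivAt (t : ℝ) (ht : t ≠ 1) {x : ℝ} (hx : 0 < x) :
    HasDerivAt (psiF t) (psi1 t x) x := by
  have hu : (0:ℝ) < (1 + x) / 2 := by positivity
  have hdu : HasDerivAt (fun y : ℝ => (1 + y) / 2) (1 / 2) x := by
    have := ((hasDerivAt_id x).const_add 1).div_const 2
    simpa using this
  have hup := hdu.rpow_const (p := t - 1) (Or.inl hu.ne')
  have hlin : HasDerivAt (fun y : ℝ => y - 1) 1 x := (hasDerivAt_id x).sub_const 1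
  have h := (hlin.mul hup).const_mul ((t - 1)⁻¹)
  refine h.congr_deriv ?_
  simp only [psi1]
  rw [show t - 1 - 1 = t - 2 by ring]
  rw [show ((1 + x) / 2) ^ (t - 1) = ((1 + x) / 2) ^ (t - 2) * ((1 + x) / 2) by
    rw [show t - 1 = (t - 2) + 1 by ring, Real.rpow_add hu, Real.rpow_one]]
  field_simp [sub_ne_zero.mpr ht]
  ring

lemma psi1_hasDerivAt (t : ℝ) (ht : t ≠ 1) {x : ℝ} (hx : 0 < x) :
    HasDerivAt (psi1 t) (psi2 t x) x := by
  have hu : (0:ℝ) < (1 + x) / 2 := by positivity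
  have hdu : HasDerivAt (fun y : ℝ => (1 + y) / 2) (1 / 2) x := by
    have := ((hasDerivAt_id x).const_add 1).div_const 2
    simpa using this
  have hup := hdu.rpow_const (p := t - 2) (Or.inl hu.ne')
  have hlin : HasDerivAt (fun y : ℝ => (t * y + 2 - t) / 2) (t / 2) x := by
    have h := ((((hasDerivAt_id' (x := x)).const_mul t).add_const 2).sub_const t).div_const 2
    simpa using h
  have h := (hup.mul hlin).const_mul ((t - 1)⁻¹)
  refine h.congr_deriv ?_
  simp only [psi2]
  rw [show t - 2 - 1 = t - 3 by ring]
  rw [show ((1 + x) / 2) ^ (t - 2) = ((1 + x) / 2) ^ (t - 3) * ((1 + x) / 2) by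
    rw [show t - 2 = (t - 3) + 1 by ring, Real.rpow_add hu, Real.rpow_one]]
  field_simp [sub_ne_zero.mpr ht]
  ring

noncomputable def CC (s t x : ℝ) : ℝ :=
  1 / x ^ (s + 1) * (((x + 1) / 2) ^ (s - t)) * (((4 - s) * x + s) / (t * x + 4 - t))

lemma psi2_pos (t x : ℝ) (ht2 : 2 ≤ t) (ht4 : t ≤ 4) (hx : 0 < x) : 0 < psi2 t x := by
  unfold psi2
  have h1 : (0:ℝ) < ((1 + x) / 2) ^ (t - 3) := Real.rpow_pos_of_pos (by positivity) _
  have h2 : (0:ℝ) < t * x + 4 - t := by nlinarith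
  exact mul_pos h1 (by positivity)

lemma phi2_eq_CC_mul (s t x : ℝ) (ht2 : 2 ≤ t) (ht4 : t ≤ 4) (hx : 0 < x) :
    phi2 s x = CC s t x * psi2 t x := by
  have hu : (0:ℝ) < (1 + x) / 2 := by positivity
  have hden : (0:ℝ) < t * x + 4 - t := by nlinarith
  have hsplit : ((1 + x) / (2 * x)) ^ (s - 3) = ((1 + x) / 2) ^ (s - 3) / x ^ (s - 3) := by
    rw [show (1 + x) / (2 * x) = ((1 + x) / 2) / x by ring, Real.div_rpow hu.le hx.le]
  have hu2 : ((x + 1) / 2) ^ (s - t) * ((1 + x) / 2) ^ (t - 3) = ((1 + x) / 2) ^ (s - 3) := by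
    rw [show (x + 1) = 1 + x by ring, ← Real.rpow_add hu]
    congr 1
    ring
  have hx1 : x ^ (s - 3) * x ^ (4 : ℕ) = x ^ (s + 1) := by
    rw [← Real.rpow_natCast x 4, ← Real.rpow_add hx]
    congr 1
    ring
  unfold phi2 psi2 CC
  rw [hsplit, ← hu2, ← hx1]
  have h3 : x ^ (s - 3) ≠ 0 := (Real.rpow_pos_of_pos hx _).ne'
  field_simp [hden.ne']
  rw [mul_div_cancel_right₀ _ (by nlinarith : x * t + 4 - t ≠ 0)]

lemma mul3_le {A B C A' B' C' : ℝ} (hA : A' ≤ A) (hB : B' ≤ B) (hC : C' ≤ C)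
    (hB0 : 0 ≤ B') (hC0 : 0 ≤ C') (hA1 : 0 ≤ A) (hB1 : 0 ≤ B) :
    A' * B' * C' ≤ A * B * C :=
  mul_le_mul (mul_le_mul hA hB hB0 hA1) hC hC0 (mul_nonneg hA1 hB1)

lemma CC_anti (s t : ℝ) (hs2 : 2 ≤ s) (hs4 : s ≤ 4) (ht2 : 2 ≤ t) (ht4 : t ≤ 4)
    {a b : ℝ} (ha : 0 < a) (hab : a ≤ b) : CC s t b ≤ CC s t a := by
  have hb : 0 < b := ha.trans_le hab
  have hda : (0:ℝ) < t * a + 4 - t := by nlinarith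
  have hdb : (0:ℝ) < t * b + 4 - t := by nlinarith
  have hna : (0:ℝ) < (4 - s) * a + s := by nlinarith
  have hnb : (0:ℝ) < (4 - s) * b + s := by nlinarith
  have hratio : ((4 - s) * b + s) / (t * b + 4 - t) ≤ ((4 - s) * a + s) / (t * a + 4 - t) := by
    rw [div_le_div_iff₀ hdb hda]
    nlinarith
  have hrb : (0:ℝ) ≤ ((4 - s) * b + s) / (t * b + 4 - t) := (div_pos hnb hdb).le
  have hra : (0:ℝ) ≤ ((4 - s) * a + s) / (t * a + 4 - t) := (div_pos hna hda).le
  rcases le_total t s with hts | hst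
  · have rewr : ∀ x : ℝ, 0 < x → CC s t x =
        ((1 + x) / (2 * x)) ^ (s - t) * (1 / x ^ (t + 1)) *
          (((4 - s) * x + s) / (t * x + 4 - t)) := by
      intro x hx
      unfold CC
      have h1 : ((1 + x) / (2 * x)) ^ (s - t) = ((x + 1) / 2) ^ (s - t) / x ^ (s - t) := by
        rw [show (1 + x) / (2 * x) = ((x + 1) / 2) / x by ring,
          Real.div_rpow (by positivity) hx.le]
      have h2 : x ^ (s - t) * x ^ (t + 1) = x ^ (s + 1) := by
        rw [← Real.rpow_add hx]
        congr 1
        ring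
      rw [h1, ← h2]
      have e1 : x ^ (s - t) ≠ 0 := (Real.rpow_pos_of_pos hx _).ne'
      have e2 : x ^ (t + 1) ≠ 0 := (Real.rpow_pos_of_pos hx _).ne'
      field_simp
    rw [rewr a ha, rewr b hb]
    have hbase : (1 + b) / (2 * b) ≤ (1 + a) / (2 * a) := by
      rw [div_le_div_iff₀ (by positivity) (by positivity)]
      nlinarith
    have f1 := Real.rpow_le_rpow (by positivity : (0:ℝ) ≤ (1 + b) / (2 * b)) hbase
      (by linarith : (0:ℝ) ≤ s - t)
    have f2 : 1 / b ^ (t + 1) ≤ 1 / a ^ (t + 1) := by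
      apply one_div_le_one_div_of_le (Real.rpow_pos_of_pos ha _)
      exact Real.rpow_le_rpow ha.le hab (by linarith)
    exact mul3_le f1 f2 hratio (by positivity) hrb
      (Real.rpow_pos_of_pos (by positivity) _).le (by positivity)
  · have rewr : ∀ x : ℝ, 0 < x → CC s t x =
        (1 / x ^ (s + 1)) * ((2 / (x + 1)) ^ (t - s)) *
          (((4 - s) * x + s) / (t * x + 4 - t)) := by
      intro x hx
      unfold CC
      rw [show s - t = -(t - s) by ring, Real.rpow_neg (by positivity),
        ← Real.inv_rpow (by positivity), inv_div]
    rw [rewr a ha, rewr b hb]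
    have f1 : (2 / (b + 1)) ^ (t - s) ≤ (2 / (a + 1)) ^ (t - s) := by
      apply Real.rpow_le_rpow (by positivity) _ (by linarith)
      apply div_le_div_of_nonneg_left (by norm_num) (by linarith) (by linarith)
    have f2 : 1 / b ^ (s + 1) ≤ 1 / a ^ (s + 1) := by
      apply one_div_le_one_div_of_le (Real.rpow_pos_of_pos ha _)
      exact Real.rpow_le_rpow ha.le hab (by linarith)
    exact mul3_le f2 f1 hratio (Real.rpow_pos_of_pos (by positivity) _).le hrb
      (by positivity) (Real.rpow_pos_of_pos (by positivity) _).le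

lemma convexOn_comb (s t a b r R : ℝ) (hs : s ≠ 1) (ht : t ≠ 1) (hr : 0 < r)
    (hkey : ∀ x ∈ Set.Ioo r R, 0 ≤ a * phi2 s x + b * psi2 t x) :
    ConvexOn ℝ (Set.Icc r R) (fun x => a * phiF s x + b * psiF t x) := by
  apply convexOn_of_hasDerivWithinAt2_nonneg (convex_Icc r R)
    (f' := fun x => a * phi1 s x + b * psi1 t x)
    (f'' := fun x => a * phi2 s x + b * psi2 t x)
  · intro x hx
    have hx0 : 0 < x := lt_of_lt_of_le hr hx.1
    exact (((phiF_hasDerivAt s hs hx0).const_mul a).add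
      ((psiF_hasDerivAt t ht hx0).const_mul b)).continuousAt.continuousWithinAt
  · rw [interior_Icc]
    intro x hx
    have hx0 : 0 < x := lt_of_lt_of_le hr hx.1.le
    exact (((phiF_hasDerivAt s hs hx0).const_mul a).add
      ((psiF_hasDerivAt t ht hx0).const_mul b)).hasDerivWithinAt
  · rw [interior_Icc]
    intro x hx
    have hx0 : 0 < x := lt_of_lt_of_le hr hx.1.le
    exact (((phi1_hasDerivAt s hs hx0).const_mul a).add
      ((psi1_hasDerivAt t ht hx0).const_mul b)).hasDerivWithinAt
  · rw [interior_Icc]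
    exact hkey

lemma jensen_nonneg (n : ℕ) (p q : Fin n → ℝ) (hq : ∀ i, 0 < q i)
    (hp1 : ∑ i, p i = 1) (hq1 : ∑ i, q i = 1) (r R : ℝ)
    (hbound : ∀ i, p i / q i ∈ Set.Icc r R) (g : ℝ → ℝ)
    (hconv : ConvexOn ℝ (Set.Icc r R) g) (hg1 : g 1 = 0) :
    0 ≤ ∑ i, q i * g (p i / q i) := by
  have h := hconv.map_sum_le (t := Finset.univ) (w := q) (p := fun i => p i / q i)
    (fun i _ => (hq i).le) hq1 (fun i _ => hbound i)
  have hsum : ∑ i, q i • (p i / q i) = 1 := by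
    rw [Finset.sum_congr rfl (fun i _ => ?_)]
    · exact hp1
    · show q i • (p i / q i) = p i
      rw [smul_eq_mul, mul_div_cancel₀ _ (hq i).ne']
  rw [hsum, hg1] at h
  simpa [smul_eq_mul] using h

lemma zeta_swap_eq (n : ℕ) (s : ℝ) (hs : s ≠ 1) (p q : Fin n → ℝ)
    (hp : ∀ i, 0 < p i) (hq : ∀ i, 0 < q i) :
    zeta n s q p = ∑ i, q i * phiF s (p i / q i) := by
  unfold zeta phiF
  rw [if_neg hs, Finset.mul_sum]
  refine Finset.sum_congr rfl fun i _ => ?_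
  have hpi := (hp i).ne'
  have hqi := (hq i).ne'
  rw [show (q i + p i) / (2 * p i) = (1 + p i / q i) / (2 * (p i / q i)) by
    field_simp]
  rw [show q i - p i = q i * (1 - p i / q i) by
    rw [mul_sub, mul_one, mul_div_cancel₀ _ hqi]]
  ring

lemma zeta_eq (n : ℕ) (t : ℝ) (ht : t ≠ 1) (p q : Fin n → ℝ)
    (hp : ∀ i, 0 < p i) (hq : ∀ i, 0 < q i) :
    zeta n t p q = ∑ i, q i * psiF t (p i / q i) := by
  unfold zeta psiF
  rw [if_neg ht, Finset.mul_sum]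
  refine Finset.sum_congr rfl fun i _ => ?_
  have hpi := (hp i).ne'
  have hqi := (hq i).ne'
  rw [show (p i + q i) / (2 * q i) = (1 + p i / q i) / 2 by field_simp; ring]
  rw [show p i - q i = q i * (p i / q i - 1) by
    rw [mul_sub, mul_one, mul_div_cancel₀ _ hqi]]
  ring

theorem stmt_19 (s t : ℝ) (hs2 : 2 ≤ s) (hs4 : s ≤ 4) (ht2 : 2 ≤ t) (ht4 : t ≤ 4)
    (n : ℕ) (hn : 2 ≤ n) (p q : Fin n → ℝ)
    (hp : ∀ i, 0 < p i) (hq : ∀ i, 0 < q i)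
    (hp1 : ∑ i, p i = 1) (hq1 : ∑ i, q i = 1)
    (r R : ℝ) (hr : 0 < r) (hrR : r ≤ R)
    (hbound : ∀ i, r ≤ p i / q i ∧ p i / q i ≤ R) :
    (1 / R ^ (s + 1)) * ((R + 1) / 2) ^ (s - t) * (((4 - s) * R + s) / (t * R + 4 - t)) * zeta n t p q ≤ zeta n s q p ∧
      zeta n s q p ≤ (1 / r ^ (s + 1)) * ((r + 1) / 2) ^ (s - t) * (((4 - s) * r + s) / (t * r + 4 - t)) * zeta n t p q := by
  have hs1 : s ≠ 1 := by linarith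
  have ht1 : t ≠ 1 := by linarith
  have hR : 0 < R := lt_of_lt_of_le hr hrR
  have hmem : ∀ i, p i / q i ∈ Set.Icc r R := fun i => ⟨(hbound i).1, (hbound i).2⟩
  have hzs : zeta n s q p = ∑ i, q i * phiF s (p i / q i) := zeta_swap_eq n s hs1 p q hp hq
  have hzt : zeta n t p q = ∑ i, q i * psiF t (p i / q i) := zeta_eq n t ht1 p q hp hq
  have hphi1 : phiF s 1 = 0 := by simp [phiF]
  have hpsi1 : psiF t 1 = 0 := by simp [psiF]
  have main : ∀ c₁ c₂ : ℝ, (∀ x ∈ Set.Ioo r R, 0 ≤ c₁ * phi2 s x + c₂ * psi2 t x) →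
      0 ≤ c₁ * zeta n s q p + c₂ * zeta n t p q := by
    intro c₁ c₂ hkey
    have hconv := convexOn_comb s t c₁ c₂ r R hs1 ht1 hr hkey
    have hg1 : c₁ * phiF s 1 + c₂ * psiF t 1 = 0 := by rw [hphi1, hpsi1]; ring
    have h0 := jensen_nonneg n p q hq hp1 hq1 r R hmem _ hconv hg1
    have hsplit : ∑ i, q i * (c₁ * phiF s (p i / q i) + c₂ * psiF t (p i / q i))
        = c₁ * (∑ i, q i * phiF s (p i / q i)) + c₂ * (∑ i, q i * psiF t (p i / q i)) := by
      rw [Finset.mul_sum, Finset.mul_sum, ← Finset.sum_add_distrib]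
      exact Finset.sum_congr rfl fun i _ => by ring
    rw [hsplit] at h0
    rw [hzs, hzt]
    linarith
  constructor
  · have h := main 1 (-(CC s t R)) ?_
    · rw [hzs, hzt] at h ⊢
      show CC s t R * (∑ i, q i * psiF t (p i / q i)) ≤ ∑ i, q i * phiF s (p i / q i)
      linarith [h, hzs, hzt]
    · intro x hx
      have hx0 : 0 < x := lt_of_lt_of_le hr hx.1.le
      have hcc := CC_anti s t hs2 hs4 ht2 ht4 hx0 hx.2.le
      have hp2 := psi2_pos t x ht2 ht4 hx0
      rw [phi2_eq_CC_mul s t x ht2 ht4 hx0]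
      nlinarith
  · have h := main (-1) (CC s t r) ?_
    · rw [hzs, hzt] at h ⊢
      show (∑ i, q i * phiF s (p i / q i)) ≤ CC s t r * ∑ i, q i * psiF t (p i / q i)
      linarith
    · intro x hx
      have hx0 : 0 < x := lt_of_lt_of_le hr hx.1.le
      have hcc := CC_anti s t hs2 hs4 ht2 ht4 hr hx.1.le
      have hp2 := psi2_pos t x ht2 ht4 hx0
      rw [phi2_eq_CC_mul s t x ht2 ht4 hx0]
      nlinarith
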